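/- ∑_{k=0}^∞ (49k + 1)·8^k/(3^k · C(3k,k)) = 81 + 16√3·π. -/

import Mathlib

open Real MeasureTheory intervalIntegral

private lemma prod_fac4 (m n : ℕ) :
    m.factorial * ∏ j ∈ Finset.range n, (m + 1 + j) = (m + n).factorial := by
  induction n with
  | zero => simp
  | succ n ih =>
    rw [Finset.prod_range_succ, ← mul_assoc, ih]
    rw [show m + (n+1) = (m + n) + 1 by ring, Nat.factorial_succ]
    ring

private lemma beta_nat4 (k : ℕ) : ∫ x in (0:ℝ)..1, x ^ k * (1 - x) ^ (2*k) =
    (k.factorial * (2*k).factorial : ℝ) / ((3*k+1).factorial) := by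
  have h := Complex.betaIntegral_eval_nat_add_one_right
    (u := (k:ℂ) + 1) (by simp; positivity) (2*k)
  rw [Complex.betaIntegral] at h
  have h2 : ∀ x : ℝ, (x:ℂ) ^ ((k:ℂ) + 1 - 1) * (1 - (x:ℂ)) ^ ((2*k:ℕ) + 1 - 1 : ℂ)
      = ((x ^ k * (1 - x) ^ (2*k) : ℝ) : ℂ) := by
    intro x
    rw [add_sub_cancel_right, add_sub_cancel_right, Complex.cpow_natCast, Complex.cpow_natCast]
    push_cast
    ring
  have h3 : (∫ x in (0:ℝ)..1, (x:ℂ) ^ ((k:ℂ) + 1 - 1) * (1 - (x:ℂ)) ^ ((2*k:ℕ) + 1 - 1 : ℂ))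
      = ((∫ x in (0:ℝ)..1, x ^ k * (1 - x) ^ (2*k) : ℝ) : ℂ) := by
    rw [← intervalIntegral.integral_ofReal]
    exact intervalIntegral.integral_congr (fun x _ => h2 x)
  rw [h3] at h
  have h4 : (∏ j ∈ Finset.range (2*k + 1), ((k:ℂ) + 1 + j))
      = ((∏ j ∈ Finset.range (2*k + 1), (k + 1 + j) : ℕ) : ℂ) := by push_cast; ring_nf
  rw [h4] at h
  have h5 := prod_fac4 k (2*k+1)
  rw [show k + (2*k+1) = 3*k+1 by ring] at h5
  have hprodpos : 0 < (∏ j ∈ Finset.range (2*k + 1), (k + 1 + j) : ℕ) :=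
    Finset.prod_pos (fun j _ => by positivity)
  have h7 : ((∫ x in (0:ℝ)..1, x ^ k * (1 - x) ^ (2*k) : ℝ) : ℂ)
      = (((2*k).factorial / (∏ j ∈ Finset.range (2*k + 1), (k + 1 + j) : ℕ) : ℝ) : ℂ) := by
    rw [h]; push_cast; ring
  rw [Complex.ofReal_inj.mp h7, div_eq_div_iff (by positivity) (by positivity), ← h5]
  push_cast
  ring

private lemma term_eq4 (k : ℕ) :
    (49 * (k : ℝ) + 1) * 8 ^ k / (3 ^ k * (Nat.choose (3 * k) k : ℝ)) =
    ∫ x in (0:ℝ)..1, ((49 * (k:ℝ) + 1) * (3 * k + 1)) * (8 * x * (1 - x)^2 / 3) ^ k := by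
  have hint : ∀ x : ℝ, ((49 * (k:ℝ) + 1) * (3 * k + 1)) * (8 * x * (1 - x)^2 / 3) ^ k
      = (((49 * (k:ℝ) + 1) * (3 * k + 1)) * (8/3 : ℝ) ^ k) * (x ^ k * (1 - x) ^ (2*k)) := by
    intro x
    rw [show (8 * x * (1 - x)^2 / 3 : ℝ) = (8/3) * (x * (1-x)^2) by ring, mul_pow, mul_pow,
      ← pow_mul]
    ring
  rw [intervalIntegral.integral_congr (fun x _ => hint x), intervalIntegral.integral_const_mul,
    beta_nat4]
  have hc := Nat.choose_mul_factorial_mul_factorial (show k ≤ 3*k by omega)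
  rw [show 3*k-k = 2*k by omega] at hc
  have hcR : ((3*k).choose k : ℝ) * (k.factorial) * ((2*k).factorial) = ((3*k).factorial : ℝ) := by
    exact_mod_cast congrArg (Nat.cast : ℕ → ℝ) hc
  have hfac : ((3*k+1).factorial : ℝ) = (3*(k:ℝ)+1) * (3*k).factorial := by
    rw [Nat.factorial_succ]; push_cast; ring
  have hch : (0:ℝ) < ((3*k).choose k : ℝ) := by
    exact_mod_cast Nat.choose_pos (show k ≤ 3*k by omega)
  have hf1 : (0:ℝ) < (k.factorial : ℝ) := by exact_mod_cast k.factorial_pos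
  have hf2 : (0:ℝ) < ((2*k).factorial : ℝ) := by exact_mod_cast (2*k).factorial_pos
  have hf3 : (0:ℝ) < ((3*k).factorial : ℝ) := by exact_mod_cast (3*k).factorial_pos
  rw [hfac, div_eq_iff (by positivity), ← hcR]
  field_simp
  ring_nf
  rw [← mul_pow]; norm_num

private lemma choose_two4 (n : ℕ) : ((n+2).choose 2 : ℝ) = ((n:ℝ)+1)*((n:ℝ)+2)/2 := by
  have h : (n+2).choose 2 * 2 = (n+1)*(n+2) := by
    induction n with
    | zero => rfl
    | succ m ih =>
      rw [show m+1+2 = (m+2)+1 from rfl, Nat.choose_succ_succ (m+2) 1, Nat.choose_one_right,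
        add_mul, ih]
      ring
  have := congrArg (Nat.cast : ℕ → ℝ) h
  push_cast at this
  linarith

private lemma pointwise_sum4 {u : ℝ} (h0 : 0 ≤ u) (h1 : u ≤ 32/81) :
    ∑' k : ℕ, ((49 * (k:ℝ) + 1) * (3 * k + 1)) * u ^ k
      = 294/(1-u)^3 - 389/(1-u)^2 + 96/(1-u) := by
  have hr : ‖u‖ < 1 := by rw [Real.norm_eq_abs, abs_of_nonneg h0]; linarith
  have h2 := (hasSum_choose_mul_geometric_of_norm_lt_one 2 hr).mul_left (294:ℝ)
  have hA := (hasSum_choose_mul_geometric_of_norm_lt_one 1 hr).mul_left (389:ℝ)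
  have hB := (hasSum_choose_mul_geometric_of_norm_lt_one 0 hr).mul_left (96:ℝ)
  have h := (h2.sub hA).add hB
  have hfun : (fun k : ℕ => 294 * (((k+2).choose 2 : ℝ) * u^k) - 389 * (((k+1).choose 1 : ℝ) * u^k)
      + 96 * (((k+0).choose 0 : ℝ) * u^k))
      = fun k : ℕ => ((49 * (k:ℝ) + 1) * (3 * k + 1)) * u ^ k := by
    funext k
    rw [choose_two4, Nat.choose_one_right, Nat.choose_zero_right]
    push_cast
    ring
  rw [hfun] at h
  rw [h.tsum_eq]
  ring

private noncomputable def Fa4 (x : ℝ) : ℝ :=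
  (1536*x^5 - 4608*x^4 + 4608*x^3 - 2544*x^2 + 1737*x - 486)
    / ((3-2*x)^2*(4*x^2-2*x+1)^2) + 32*Real.sqrt 3 * Real.arctan ((4*x-1)/Real.sqrt 3)

private lemma Fa4_deriv {x : ℝ} (hx1 : x ≤ 1) :
    HasDerivAt Fa4
      (294/(1-8*x*(1-x)^2/3)^3 - 389/(1-8*x*(1-x)^2/3)^2 + 96/(1-8*x*(1-x)^2/3)) x := by
  have hq : (0:ℝ) < 4*x^2-2*x+1 := by nlinarith [sq_nonneg (4*x-1)]
  have hl : (0:ℝ) < 3-2*x := by linarith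
  have hufac : 1 - 8*x*(1-x)^2/3 = (3-2*x)*(4*x^2-2*x+1)/3 := by ring
  have hu : (0:ℝ) < 1 - 8*x*(1-x)^2/3 := by rw [hufac]; positivity
  have hs : (0:ℝ) < Real.sqrt 3 := Real.sqrt_pos.mpr (by norm_num)
  have e5 : HasDerivAt (fun y:ℝ => y^5) (5*x^4) x := by simpa using hasDerivAt_pow 5 x
  have e4 : HasDerivAt (fun y:ℝ => y^4) (4*x^3) x := by simpa using hasDerivAt_pow 4 x
  have e3 : HasDerivAt (fun y:ℝ => y^3) (3*x^2) x := by simpa using hasDerivAt_pow 3 x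
  have e2 : HasDerivAt (fun y:ℝ => y^2) (2*x) x := by simpa using hasDerivAt_pow 2 x
  have e1 : HasDerivAt (fun y:ℝ => y) 1 x := hasDerivAt_id x
  have hP : HasDerivAt (fun y:ℝ => 1536*y^5 - 4608*y^4 + 4608*y^3 - 2544*y^2 + 1737*y - 486)
      (1536*(5*x^4) - 4608*(4*x^3) + 4608*(3*x^2) - 2544*(2*x) + 1737*1) x :=
    (((((e5.const_mul 1536).sub (e4.const_mul 4608)).add
      (e3.const_mul 4608)).sub (e2.const_mul 2544)).add (e1.const_mul 1737)).sub_const 486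
  have hl1 : HasDerivAt (fun y:ℝ => 3-2*y) (-2) x := by
    simpa using (e1.const_mul 2).const_sub (3:ℝ)
  have hq1 : HasDerivAt (fun y:ℝ => 4*y^2-2*y+1) (4*(2*x)-2) x := by
    simpa using (((e2.const_mul 4).sub (e1.const_mul 2)).add_const 1)
  have hS : HasDerivAt (fun y:ℝ => (3-2*y)^2*(4*y^2-2*y+1)^2)
      ((2*(3-2*x)*(-2)) * (4*x^2-2*x+1)^2 + (3-2*x)^2 * (2*(4*x^2-2*x+1)*(4*(2*x)-2))) x := by
    have := (hl1.pow 2).mul (hq1.pow 2)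
    refine this.congr_deriv ?_
    simp only [Pi.pow_apply]
    push_cast
    ring
  have hSne : ((3-2*x)^2*(4*x^2-2*x+1)^2) ≠ 0 := by positivity
  have hrat := hP.div hS hSne
  have hlin : HasDerivAt (fun y:ℝ => (4*y-1)/Real.sqrt 3) (4/Real.sqrt 3) x := by
    simpa using ((e1.const_mul 4).sub_const 1).div_const (Real.sqrt 3)
  have harc := (Real.hasDerivAt_arctan ((4*x-1)/Real.sqrt 3)).comp x hlin
  have harc2 := harc.const_mul (32*Real.sqrt 3)
  have hval : 32*Real.sqrt 3 * (1/(1+((4*x-1)/Real.sqrt 3)^2) * (4/Real.sqrt 3))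
      = 96/(4*x^2-2*x+1) := by
    have h3 : Real.sqrt 3 * Real.sqrt 3 = 3 := Real.mul_self_sqrt (by norm_num)
    rw [div_pow, Real.sq_sqrt (by norm_num : (0:ℝ) ≤ 3)]
    rw [eq_div_iff hq.ne']
    field_simp
    ring
  rw [hval] at harc2
  have htot := hrat.add harc2
  refine htot.congr_deriv ?_
  rw [hufac]
  have hl' := hl.ne'
  have hq' := hq.ne'
  have hl'' : 3 - x * 2 ≠ 0 := by intro h; apply hl'; linear_combination h
  have hq'' : x * (x * 4 - 2) + 1 ≠ 0 := by intro h; apply hq'; linear_combination h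
  field_simp
  ring

theorem stmt_4 :
    ∑' k : ℕ, (49 * (k : ℝ) + 1) * 8 ^ k / (3 ^ k * (Nat.choose (3 * k) k : ℝ)) =
      81 + 16 * Real.sqrt 3 * Real.pi := by
  set f : ℕ → ℝ → ℝ :=
    fun k x => ((49 * (k:ℝ) + 1) * (3 * k + 1)) * (8 * x * (1 - x)^2 / 3) ^ k with hf
  have hubd : ∀ x : ℝ, x ∈ Set.Ioc (0:ℝ) 1 →
      0 ≤ 8 * x * (1 - x)^2 / 3 ∧ 8 * x * (1 - x)^2 / 3 ≤ 32/81 := by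
    rintro x ⟨hx0, hx1⟩
    constructor
    · positivity
    · nlinarith [mul_nonneg (sq_nonneg (3*x-1)) (show (0:ℝ) ≤ 4 - 3*x by linarith),
        sq_nonneg (3*x-1)]
  have hcont : ∀ k, Continuous (f k) := by
    intro k
    fun_prop
  have hint : ∀ k, Integrable (f k) (volume.restrict (Set.Ioc (0:ℝ) 1)) :=
    fun k => (hcont k).integrableOn_Ioc
  have hbound : ∀ k, ∀ x ∈ Set.Ioc (0:ℝ) 1,
      ‖‖f k x‖‖ ≤ ((49 * (k:ℝ) + 1) * (3 * k + 1)) * (32/81) ^ k := by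
    intro k x hx
    obtain ⟨hu0, hu1⟩ := hubd x hx
    rw [norm_norm, hf]
    have hck : (0:ℝ) ≤ (49 * (k:ℝ) + 1) * (3 * k + 1) := by positivity
    rw [Real.norm_eq_abs, abs_of_nonneg (by positivity)]
    exact mul_le_mul_of_nonneg_left (pow_le_pow_left₀ hu0 hu1 k) hck
  have hsumC : Summable (fun k : ℕ => ((49 * (k:ℝ) + 1) * (3 * k + 1)) * (32/81) ^ k) := by
    have hr : ‖(32/81 : ℝ)‖ < 1 := by rw [Real.norm_eq_abs, abs_of_nonneg (by norm_num : (0:ℝ) ≤ 32/81)]; norm_num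
    have h1 := ((summable_pow_mul_geometric_of_norm_lt_one 2 hr).mul_left (147:ℝ)).add
      (((summable_pow_mul_geometric_of_norm_lt_one 1 hr).mul_left (52:ℝ)).add
        (summable_geometric_of_norm_lt_one hr))
    apply h1.congr
    intro k
    push_cast
    ring
  have hnormint : ∀ k, (∫ x in Set.Ioc (0:ℝ) 1, ‖f k x‖) ≤
      ((49 * (k:ℝ) + 1) * (3 * k + 1)) * (32/81) ^ k := by
    intro k
    have h := norm_setIntegral_le_of_norm_le_const (μ := volume)
      (s := Set.Ioc (0:ℝ) 1) (f := fun x => ‖f k x‖)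
      (by simp) (hbound k)
    rw [measureReal_def, Real.volume_Ioc] at h
    simp only [sub_zero, ENNReal.toReal_ofReal zero_le_one, mul_one] at h
    calc (∫ x in Set.Ioc (0:ℝ) 1, ‖f k x‖)
        ≤ ‖∫ x in Set.Ioc (0:ℝ) 1, ‖f k x‖‖ := le_abs_self _
      _ ≤ _ := h
  have hsum : Summable (fun k => ∫ x in Set.Ioc (0:ℝ) 1, ‖f k x‖) :=
    Summable.of_nonneg_of_le
      (fun k => integral_nonneg (fun x => norm_nonneg _)) hnormint hsumC
  have hswap := MeasureTheory.integral_tsum_of_summable_integral_norm hint hsum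
  have hstep1 : ∑' k : ℕ, (49 * (k : ℝ) + 1) * 8 ^ k / (3 ^ k * (Nat.choose (3 * k) k : ℝ))
      = ∑' k : ℕ, ∫ x in Set.Ioc (0:ℝ) 1, f k x := by
    congr 1
    funext k
    rw [term_eq4 k, intervalIntegral.integral_of_le zero_le_one]
  rw [hstep1, hswap]
  have hG : ∀ x ∈ Set.Ioc (0:ℝ) 1, (∑' k, f k x)
      = 294/(1-8*x*(1-x)^2/3)^3 - 389/(1-8*x*(1-x)^2/3)^2 + 96/(1-8*x*(1-x)^2/3) := by
    intro x hx
    obtain ⟨hu0, hu1⟩ := hubd x hx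
    exact pointwise_sum4 hu0 hu1
  rw [MeasureTheory.setIntegral_congr_fun measurableSet_Ioc hG,
    ← intervalIntegral.integral_of_le zero_le_one]
  have hcontG : ContinuousOn
      (fun x : ℝ => 294/(1-8*x*(1-x)^2/3)^3 - 389/(1-8*x*(1-x)^2/3)^2 + 96/(1-8*x*(1-x)^2/3))
      (Set.uIcc 0 1) := by
    have hne : ∀ x ∈ Set.uIcc (0:ℝ) 1, 1-8*x*(1-x)^2/3 ≠ 0 := by
      intro x hx
      rw [Set.uIcc_of_le zero_le_one] at hx
      obtain ⟨hx0, hx1⟩ := hx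
      have hq : (0:ℝ) < 4*x^2-2*x+1 := by nlinarith [sq_nonneg (4*x-1)]
      have : 1 - 8*x*(1-x)^2/3 = (3-2*x)*(4*x^2-2*x+1)/3 := by ring
      rw [this]
      have hl : (0:ℝ) < 3-2*x := by linarith
      positivity
    have hpoly : ContinuousOn (fun x : ℝ => 1-8*x*(1-x)^2/3) (Set.uIcc 0 1) := by fun_prop
    exact ((continuousOn_const.div (hpoly.pow 3)
        (fun x hx => pow_ne_zero 3 (hne x hx))).sub
      (continuousOn_const.div (hpoly.pow 2)
        (fun x hx => pow_ne_zero 2 (hne x hx)))).add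
      (continuousOn_const.div hpoly hne)
  have hFTC := intervalIntegral.integral_eq_sub_of_hasDerivAt
    (f := Fa4)
    (fun x hx => Fa4_deriv (by rw [Set.uIcc_of_le zero_le_one] at hx; exact hx.2))
    (hcontG.intervalIntegrable)
  rw [hFTC]
  have harc1 : Real.arctan ((4*1-1)/Real.sqrt 3) = Real.pi / 3 := by
    have h3 : (4*(1:ℝ)-1)/Real.sqrt 3 = Real.sqrt 3 := by
      rw [show (4*(1:ℝ)-1) = Real.sqrt 3 * Real.sqrt 3 by
        rw [Real.mul_self_sqrt (by norm_num : (0:ℝ) ≤ 3)]; norm_num]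
      field_simp
    rw [h3]
    exact Real.arctan_eq_of_tan_eq Real.tan_pi_div_three
      ⟨by linarith [Real.pi_pos], by linarith [Real.pi_pos]⟩
  have harc0 : Real.arctan ((4*0-1)/Real.sqrt 3) = -(Real.pi / 6) := by
    have h3 : (4*(0:ℝ)-1)/Real.sqrt 3 = -(1/Real.sqrt 3) := by ring
    rw [h3, Real.arctan_neg]
    congr 1
    exact Real.arctan_eq_of_tan_eq Real.tan_pi_div_six
      ⟨by linarith [Real.pi_pos], by linarith [Real.pi_pos]⟩
  rw [Fa4, Fa4, harc1, harc0]
  norm_num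
  ring
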